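/- Let T be a tree on vertex set [n] and i ∈ [n]. Define the q^2-moment Moment(i) = Σ_{j ∈ [n]} (1 + q^2(deg(j) - 1)) · [d(i,j)]_{q^2}. Then Moment(i) = (n-1) + 2q^2 · Σ_{j ∈ [n]} (deg(j) - 1) · [d(i,j)]_{q^2}. -/

import Mathlib

open Finset Polynomial

/-- The `q²`-integer `[m]_{q²} = 1 + q² + q⁴ + ⋯ + q^{2(m-1)}` in `ℝ[q]`. -/
noncomputable def qSqInt (m : ℕ) : Polynomial ℝ :=
  ∑ s ∈ Finset.range m, X ^ (2 * s)

/-- The `q²`-analogue of the moment of vertex `i` in `T`: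
`Moment(i) = ∑_j (1 + q²(deg j - 1)) [d(i,j)]_{q²}`. -/
noncomputable def qMoment {n : ℕ} (G : SimpleGraph (Fin n)) [DecidableRel G.Adj]
    (i : Fin n) : Polynomial ℝ :=
  ∑ j : Fin n, (1 + X ^ 2 * ((G.degree j : Polynomial ℝ) - 1)) * qSqInt (G.dist i j)

section aux
open SimpleGraph Walk

set_option linter.unusedSectionVars false

section tree
variable {V : Type*} [DecidableEq V] {G : SimpleGraph V}

noncomputable def treePath (hG : G.IsTree) (j i : V) : G.Walk j i :=
  (hG.existsUnique_path j i).exists.choose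

lemma treePath_isPath (hG : G.IsTree) (j i : V) : (treePath hG j i).IsPath :=
  (hG.existsUnique_path j i).exists.choose_spec

lemma path_eq_treePath (hG : G.IsTree) {j i : V} (p : G.Walk j i) (hp : p.IsPath) :
    p = treePath hG j i :=
  ((hG.existsUnique_path j i).unique hp (treePath_isPath hG j i))

lemma length_eq_dist (hG : G.IsTree) {j i : V} (p : G.Walk j i) (hp : p.IsPath) :
    p.length = G.dist j i := by
  refine le_antisymm ?_ (SimpleGraph.dist_le p)
  obtain ⟨w, hw⟩ := (hG.isConnected.preconnected j i).exists_walk_length_eq_dist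
  calc p.length = w.bypass.length := by
        rw [path_eq_treePath hG p hp, path_eq_treePath hG w.bypass w.bypass_isPath]
    _ ≤ w.length := w.length_bypass_le
    _ = _ := hw

noncomputable def par (hG : G.IsTree) (i j : V) : V := (treePath hG j i).getVert 1

lemma par_self (hG : G.IsTree) (i : V) : par hG i i = i := by
  have : (Walk.nil : G.Walk i i) = treePath hG i i := path_eq_treePath hG _ IsPath.nil
  rw [par, ← this]
  rfl

lemma treePath_length_pos (hG : G.IsTree) {i j : V} (h : j ≠ i) :
    0 < (treePath hG j i).length := by
  rw [length_eq_dist hG _ (treePath_isPath hG j i)]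
  exact hG.isConnected.pos_dist_of_ne h

lemma adj_par (hG : G.IsTree) {i j : V} (h : j ≠ i) : G.Adj j (par hG i j) := by
  have := (treePath hG j i).adj_getVert_succ (treePath_length_pos hG h)
  simpa [par] using this

lemma dist_par (hG : G.IsTree) {i j : V} (h : j ≠ i) :
    G.dist i (par hG i j) = G.dist i j - 1 := by
  have hnn : ¬ (treePath hG j i).Nil :=
    Walk.not_nil_iff_lt_length.mpr (treePath_length_pos hG h)
  have ht : ((treePath hG j i).tail).IsPath := (treePath_isPath hG j i).tail
  have hlen : ((treePath hG j i).tail).length + 1 = (treePath hG j i).length :=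
    Walk.length_tail_add_one hnn
  have h1 : G.dist ((treePath hG j i).getVert 1) i = G.dist j i - 1 := by
    rw [← length_eq_dist hG _ ht, ← length_eq_dist hG _ (treePath_isPath hG j i)]
    omega
  rw [SimpleGraph.dist_comm (u := i) (v := par hG i j),
    SimpleGraph.dist_comm (u := i) (v := j)]
  exact h1

lemma par_eq_of_adj (hG : G.IsTree) {i j : V} (h : G.Adj j i) : par hG i j = i := by
  have hp : (Walk.cons h Walk.nil : G.Walk j i).IsPath := by
    simp [Walk.cons_isPath_iff, h.ne]
  rw [par, ← path_eq_treePath hG _ hp]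
  rfl

lemma par_dichotomy (hG : G.IsTree) {i j k : V} (h : G.Adj j k) :
    par hG i j = k ∨ par hG i k = j := by
  by_cases hk : k ∈ (treePath hG j i).support
  · left
    have hedge : ((treePath hG j i).takeUntil k hk) = Walk.cons h Walk.nil :=
      ((hG.existsUnique_path j k).unique ((treePath_isPath hG j i).takeUntil hk)
        (by simp [Walk.cons_isPath_iff, h.ne]))
    have hspec := (treePath hG j i).take_spec hk
    rw [hedge] at hspec
    rw [par, ← hspec]
    simp
  · right
    have hp : (Walk.cons h.symm (treePath hG j i) : G.Walk k i).IsPath :=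
      (treePath_isPath hG j i).cons hk
    rw [par, ← path_eq_treePath hG _ hp]
    simp

lemma par_not_both (hG : G.IsTree) {i j k : V} (hj : j ≠ i) (hk : k ≠ i)
    (h1 : par hG i j = k) (h2 : par hG i k = j) : False := by
  have d1 := dist_par hG hj; rw [h1] at d1
  have d2 := dist_par hG hk; rw [h2] at d2
  have p1 := hG.isConnected.pos_dist_of_ne (Ne.symm hj)
  have p2 := hG.isConnected.pos_dist_of_ne (Ne.symm hk)
  omega
end tree

section count
variable {V : Type*} [Fintype V] [DecidableEq V] {G : SimpleGraph V} [DecidableRel G.Adj]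

lemma card_fiber (hG : G.IsTree) (i k : V) [DecidablePred fun j => par hG i j = k] :
    ((univ.erase i).filter (fun j => par hG i j = k)).card
      = if k = i then G.degree k else G.degree k - 1 := by
  by_cases hki : k = i
  · subst hki
    rw [if_pos rfl, ← card_neighborFinset_eq_degree]
    congr 1
    ext j
    simp only [mem_filter, mem_erase, mem_neighborFinset, mem_univ, true_and, and_true]
    constructor
    · rintro ⟨hj, hpar⟩
      have h := adj_par hG hj
      rw [hpar] at h; exact h.symm
    · intro hadj
      refine ⟨hadj.ne', ?_⟩
      rcases par_dichotomy hG (i := k) hadj.symm with h | h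
      · exact h
      · rw [par_self] at h; exact absurd h hadj.ne
  · rw [if_neg hki]
    have hadjk : G.Adj k (par hG i k) := adj_par hG hki
    have hset : (univ.erase i).filter (fun j => par hG i j = k)
        = (G.neighborFinset k).erase (par hG i k) := by
      ext j
      simp only [mem_filter, mem_erase, mem_neighborFinset, mem_univ, true_and, and_true]
      constructor
      · rintro ⟨hj, hpar⟩
        refine ⟨?_, ?_⟩
        · rintro rfl
          exact par_not_both hG hj hki hpar rfl
        · have h := adj_par hG hj
          rw [hpar] at h; exact h.symm
      · rintro ⟨hne, hadj⟩
        have hji : j ≠ i := by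
          rintro rfl
          exact hne (par_eq_of_adj hG hadj).symm
        refine ⟨hji, ?_⟩
        rcases par_dichotomy hG (i := i) hadj.symm with h | h
        · exact h
        · exact absurd h.symm hne
    rw [hset, Finset.card_erase_of_mem (by rwa [mem_neighborFinset]),
      card_neighborFinset_eq_degree]
end count

lemma qSqInt_zero : qSqInt 0 = 0 := by simp [qSqInt]

lemma qSqInt_succ (m : ℕ) : qSqInt (m + 1) = 1 + X ^ 2 * qSqInt m := by
  rw [qSqInt, Finset.sum_range_succ', qSqInt, Finset.mul_sum]
  simp only [mul_zero, pow_zero]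
  rw [add_comm]
  congr 1
  refine Finset.sum_congr rfl fun s _ => ?_
  ring


section key
variable {V : Type*} [Fintype V] [DecidableEq V] {G : SimpleGraph V} [DecidableRel G.Adj]

lemma key_sum (hG : G.IsTree) (i : V) :
    ∑ j : V, qSqInt (G.dist i j)
      = ((Fintype.card V : Polynomial ℝ) - 1)
        + X ^ 2 * ∑ j : V, ((G.degree j : Polynomial ℝ) - 1) * qSqInt (G.dist i j) := by
  classical
  have hFi : qSqInt (G.dist i i) = 0 := by rw [SimpleGraph.dist_self]; exact qSqInt_zero
  have hcardpos : 0 < Fintype.card V := Fintype.card_pos_iff.mpr ⟨i⟩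
  -- peel off i from the LHS
  rw [← Finset.sum_erase_add _ _ (mem_univ i), hFi, add_zero]
  -- rewrite each term via the parent
  have h1 : ∀ j ∈ univ.erase i, qSqInt (G.dist i j)
      = 1 + X ^ 2 * qSqInt (G.dist i (par hG i j)) := by
    intro j hj
    have hji : j ≠ i := (Finset.mem_erase.mp hj).1
    have hd : G.dist i j = (G.dist i j - 1) + 1 :=
      (Nat.succ_pred_eq_of_pos (hG.isConnected.pos_dist_of_ne (Ne.symm hji))).symm
    rw [dist_par hG hji]
    conv_lhs => rw [hd]
    rw [qSqInt_succ]
  rw [Finset.sum_congr rfl h1, Finset.sum_add_distrib, Finset.sum_const, ← Finset.mul_sum]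
  have hcard : ((univ.erase i).card) • (1 : Polynomial ℝ)
      = ((Fintype.card V : Polynomial ℝ) - 1) := by
    rw [Finset.card_erase_of_mem (mem_univ i), Finset.card_univ, nsmul_eq_mul, mul_one,
      Nat.cast_sub hcardpos, Nat.cast_one]
  rw [hcard]
  congr 1
  -- remaining: X^2 * ∑_{j ≠ i} qSqInt (dist i (par j)) = X^2 * ∑_k (deg k - 1) qSqInt (dist i k)
  congr 1
  rw [← Finset.sum_fiberwise_of_maps_to (g := par hG i) (t := (univ : Finset V))
    (fun j _ => mem_univ _) (fun j => qSqInt (G.dist i (par hG i j)))]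
  refine Finset.sum_congr rfl fun k _ => ?_
  have hinner : ∑ j ∈ (univ.erase i).filter (fun j => par hG i j = k),
      qSqInt (G.dist i (par hG i j))
      = (((univ.erase i).filter (fun j => par hG i j = k)).card : Polynomial ℝ)
        * qSqInt (G.dist i k) := by
    rw [Finset.sum_congr rfl (fun j hj => by rw [(Finset.mem_filter.mp hj).2]),
      Finset.sum_const, nsmul_eq_mul]
  rw [hinner, card_fiber hG i k]
  by_cases hk : k = i
  · subst hk
    rw [if_pos rfl, hFi, mul_zero, mul_zero]
  · rw [if_neg hk]
    have hdeg : 1 ≤ G.degree k :=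
      G.degree_pos_iff_exists_adj k |>.mpr ⟨par hG i k, adj_par hG hk⟩
    rw [Nat.cast_sub hdeg, Nat.cast_one]
end key

end aux

/-- For a tree `T` on `[n]` and a vertex `i`,
`Moment(i) = (n-1) + 2q² ∑_j (deg j - 1)[d(i,j)]_{q²}`. -/
theorem qMoment_alt {n : ℕ} (G : SimpleGraph (Fin n)) [DecidableRel G.Adj]
    (hG : G.IsTree) (i : Fin n) :
    qMoment G i
      = ((n : Polynomial ℝ) - 1)
        + 2 * X ^ 2 * ∑ j : Fin n, ((G.degree j : Polynomial ℝ) - 1) * qSqInt (G.dist i j) := by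
  classical
  have key := key_sum hG i
  rw [Fintype.card_fin] at key
  have expand : qMoment G i = (∑ j : Fin n, qSqInt (G.dist i j))
      + X ^ 2 * ∑ j : Fin n, ((G.degree j : Polynomial ℝ) - 1) * qSqInt (G.dist i j) := by
    rw [qMoment, Finset.mul_sum, ← Finset.sum_add_distrib]
    refine Finset.sum_congr rfl fun j _ => ?_
    ring
  rw [expand, key]; ring
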